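/- For every α ∈ (0,1), the set 𝒱₁ is compact with respect to the weighted uniform metric d(f,g) = sup_{x∈ℝ} ρ(x)|f(x)−g(x)|; in particular, every sequence in 𝒱₁ admits a subsequence that converges in this metric to an element of 𝒱₁. -/

import Mathlib

open Real MeasureTheory Set Filter BoundedContinuousFunction

noncomputable section

namespace GSQGplane

/-- The constant `c_{1,α} = 2^{2α-1} Γ(1/2+α) / (√π Γ(1-α))`. -/
def C1 (α : ℝ) : ℝ :=
  (2:ℝ) ^ (2*α - 1) * Real.Gamma (1/2 + α) / (Real.sqrt π * Real.Gamma (1 - α))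

/-- The constant `η = 2 (3/(2(3-2α)(5-2α)(1+4^α)))^{1/min(α,1-α)}`. -/
def etaC (α : ℝ) : ℝ :=
  2 * (3 / (2*(3 - 2*α)*(5 - 2*α)*(1 + (4:ℝ) ^ α))) ^ (1 / min α (1 - α))

/-- The weight `ρ(x) = (1+|x|)^{-α}`. -/
def rho (α : ℝ) (x : ℝ) : ℝ := (1 + |x|) ^ (-α)

/-- The invariant set `𝒱₁`: even continuous functions with finite weighted sup-norm,
`f(0)=1`, nonnegative and non-increasing on `[0,∞)`, `x ↦ f(√x)` convex,
`f ≥ max(0,1-x²)`, and left derivative at `1/2` at most `-η`. -/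
def V1 (α : ℝ) (f : ℝ → ℝ) : Prop :=
  Continuous f ∧ (∀ x : ℝ, f (-x) = f x) ∧ (∃ M : ℝ, ∀ x : ℝ, rho α x * |f x| ≤ M) ∧
  f 0 = 1 ∧ (∀ x ∈ Ici (0:ℝ), 0 ≤ f x) ∧ AntitoneOn f (Ici (0:ℝ)) ∧
  ConvexOn ℝ (Ici (0:ℝ)) (fun x => f (Real.sqrt x)) ∧
  (∀ x : ℝ, max 0 (1 - x^2) ≤ f x) ∧
  (∃ d : ℝ, HasDerivWithinAt f d (Iio (1/2 : ℝ)) (1/2 : ℝ) ∧ d ≤ -(etaC α))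

/-- The normalization functional `c(f)`. -/
def cV (α : ℝ) (f : ℝ → ℝ) : ℝ :=
  (2*α*(1+2*α)/3) * C1 α * ∫ ξ in Ioi (0:ℝ), (1 - f ξ) * ξ ^ (-1 - 2*α)

/-- The functional `b(f) = 2 c_{1,α} ∫₀^∞ f(ξ) ξ^{1-2α} dξ`. -/
def bV (α : ℝ) (f : ℝ → ℝ) : ℝ :=
  2 * C1 α * ∫ ξ in Ioi (0:ℝ), f ξ * ξ ^ (1 - 2*α)

/-- The linear operator `𝒯_α(f)`, defined for `x > 0`, set to `0` at `x = 0`,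
and extended evenly to `ℝ` (via `|x|`). -/
def TV (α : ℝ) (f : ℝ → ℝ) (x : ℝ) : ℝ :=
  if x = 0 then 0
  else if α = 1/2 then
    C1 α * ∫ ξ in Ioi (0:ℝ), f ξ * ((ξ / |x|) * Real.log ((|x| + ξ) / |(|x| - ξ)|) - 2)
  else
    (C1 α / (1 - 2*α)) * ∫ ξ in Ioi (0:ℝ),
      f ξ * ((ξ / |x|) * ((|x| + ξ) ^ (1 - 2*α) - |(|x| - ξ)| ^ (1 - 2*α))
        - 2*(1 - 2*α) * ξ ^ (1 - 2*α))

/-- The nonlinear map `ℛ_α(f)(x) = max(0, 1 + 𝒯_α(f)(x)/c(f))`. -/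
def RV (α : ℝ) (f : ℝ → ℝ) (x : ℝ) : ℝ := max 0 (1 + TV α f x / cV α f)

set_option linter.unusedVariables false

variable {α : ℝ} {f : ℝ → ℝ}

lemma rho_pos (hα : α ∈ Ioo (0:ℝ) 1) (x : ℝ) : 0 < rho α x :=
  Real.rpow_pos_of_pos (by positivity) _

lemma rho_le_one (hα : α ∈ Ioo (0:ℝ) 1) (x : ℝ) : rho α x ≤ 1 :=
  Real.rpow_le_one_of_one_le_of_nonpos (by simp [abs_nonneg]) (by linarith [hα.1])

lemma rho_cont (hα : α ∈ Ioo (0:ℝ) 1) : Continuous (rho α) := by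
  apply Continuous.rpow_const (by continuity)
  intro x; left; positivity

lemma V1.abs_eq (hf : V1 α f) (x : ℝ) : f x = f |x| := by
  rcases abs_cases x with ⟨h, _⟩ | ⟨h, _⟩
  · rw [h]
  · rw [h, hf.2.1]

lemma V1.nonneg (hf : V1 α f) (x : ℝ) : 0 ≤ f x := by
  rw [hf.abs_eq]; exact hf.2.2.2.2.1 _ (abs_nonneg x)

lemma V1.le_one (hf : V1 α f) (x : ℝ) : f x ≤ 1 := by
  rw [hf.abs_eq, ← hf.2.2.2.1]
  exact hf.2.2.2.2.2.1 (mem_Ici.mpr le_rfl) (mem_Ici.mpr (abs_nonneg x)) (abs_nonneg x)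

lemma V1.sqrt_eq (hf : V1 α f) (x : ℝ) : f (Real.sqrt (x^2)) = f x := by
  rw [Real.sqrt_sq_eq_abs, ← hf.abs_eq]

lemma V1.sqrt_lb (hf : V1 α f) {r : ℝ} (hr : 0 ≤ r) : 1 - r ≤ f (Real.sqrt r) := by
  rcases eq_or_lt_of_le hr with rfl | h
  · rw [Real.sqrt_zero, hf.2.2.2.1]; linarith
  · have h2 : Real.sqrt r ^ 2 = r := Real.sq_sqrt h.le
    calc 1 - r = 1 - Real.sqrt r ^ 2 := by rw [h2]
      _ ≤ max 0 (1 - Real.sqrt r ^ 2) := le_max_right _ _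
      _ ≤ _ := hf.2.2.2.2.2.2.2.1 _

/-- One-Lipschitz bound for `h(s) = f(√s)` on `[0,∞)`. -/
lemma V1.sqrt_lip (hf : V1 α f) {s t : ℝ} (hs : 0 ≤ s) (hst : s ≤ t) :
    |f (Real.sqrt s) - f (Real.sqrt t)| ≤ t - s := by
  have ht : 0 ≤ t := hs.trans hst
  have hanti : f (Real.sqrt t) ≤ f (Real.sqrt s) :=
    hf.2.2.2.2.2.1 (mem_Ici.mpr (Real.sqrt_nonneg s)) (mem_Ici.mpr (Real.sqrt_nonneg t))
      (Real.sqrt_le_sqrt hst)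
  rw [abs_of_nonneg (by linarith)]
  rcases eq_or_lt_of_le hst with rfl | hlt
  · simp
  rcases eq_or_lt_of_le hs with rfl | hs0
  · have := hf.sqrt_lb ht
    rw [Real.sqrt_zero, hf.2.2.2.1]
    linarith
  have hcv := hf.2.2.2.2.2.2.1
  have hsl := hcv.slope_mono_adjacent (x := 0) (y := s) (z := t)
      (mem_Ici.mpr le_rfl) (mem_Ici.mpr ht) hs0 hlt
  rw [Real.sqrt_zero, hf.2.2.2.1] at hsl
  have h1 : -1 ≤ (f (Real.sqrt s) - 1) / (s - 0) := by
    rw [le_div_iff₀ (by linarith)]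
    have := hf.sqrt_lb hs
    linarith
  have h2 : -1 ≤ (f (Real.sqrt t) - f (Real.sqrt s)) / (t - s) := le_trans h1 hsl
  rw [le_div_iff₀ (by linarith)] at h2
  linarith

/-- The key local Lipschitz estimate. -/
lemma V1.sq_lip (hf : V1 α f) (x y : ℝ) : |f x - f y| ≤ |x^2 - y^2| := by
  rcases le_total (x^2) (y^2) with h | h
  · rw [← hf.sqrt_eq x, ← hf.sqrt_eq y, abs_of_nonpos (by linarith : x^2 - y^2 ≤ 0),
      abs_sub_comm]
    have := hf.sqrt_lip (by positivity : (0:ℝ) ≤ x^2) h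
    rw [abs_sub_comm]
    linarith
  · rw [← hf.sqrt_eq x, ← hf.sqrt_eq y, abs_of_nonneg (by linarith : (0:ℝ) ≤ x^2 - y^2),
      abs_sub_comm]
    exact hf.sqrt_lip (by positivity) h

open Topology in
section
open Topology

/-- the secant slope of `f∘√` based at `1/4`. -/
def Sl (f : ℝ → ℝ) (t : ℝ) : ℝ := (f (Real.sqrt t) - f (1/2)) / (t - 1/4)

lemma sqrt_quarter : Real.sqrt (1/4 : ℝ) = 1/2 := by
  rw [show (1/4 : ℝ) = (1/2)^2 by norm_num, Real.sqrt_sq (by norm_num)]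

lemma sqrt_eq' (hev : ∀ x : ℝ, f (-x) = f x) (x : ℝ) : f (Real.sqrt (x^2)) = f x := by
  rw [Real.sqrt_sq_eq_abs]
  rcases abs_cases x with ⟨h, _⟩ | ⟨h, _⟩
  · rw [h]
  · rw [h, hev]

lemma Sl_mono' (hcv : ConvexOn ℝ (Ici (0:ℝ)) (fun x => f (Real.sqrt x))) :
    MonotoneOn (Sl f) (Ico (0:ℝ) (1/4)) := by
  intro t1 h1 t2 h2 h12
  have := hcv.secant_mono (a := (1/4:ℝ)) (x := t1) (y := t2)
    (by norm_num) (mem_Ici.mpr h1.1) (mem_Ici.mpr h2.1) (ne_of_lt h1.2) (ne_of_lt h2.2) h12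
  rw [sqrt_quarter] at this
  exact this

lemma Sl_le' (hcv : ConvexOn ℝ (Ici (0:ℝ)) (fun x => f (Real.sqrt x))) {t : ℝ}
    (ht : t ∈ Ico (0:ℝ) (1/4)) : Sl f t ≤ Sl f (1/2) := by
  have := hcv.secant_mono (a := (1/4:ℝ)) (x := t) (y := (1/2:ℝ))
    (by norm_num) (mem_Ici.mpr ht.1) (by norm_num) (ne_of_lt ht.2) (by norm_num)
    (by linarith [ht.2])
  rw [sqrt_quarter] at this
  exact this

lemma slope_eq' (hev : ∀ x : ℝ, f (-x) = f x) {y : ℝ} (hy : y ∈ Ioo (0:ℝ) (1/2)) :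
    slope f (1/2) y = Sl f (y^2) * (y + 1/2) := by
  have h1 : y - 1/2 ≠ 0 := by have := hy.2; intro h; linarith [sub_eq_zero.mp h]
  have h2 : y^2 - 1/4 ≠ 0 := by
    have : y^2 < 1/4 := by nlinarith [hy.1, hy.2]
    linarith
  have h3 : y + 1/2 ≠ 0 := by have := hy.1; positivity
  have h4 : y^2 - 1/4 = (y - 1/2) * (y + 1/2) := by ring
  rw [slope_def_field, Sl, sqrt_eq' hev, h4, ← div_div, div_mul_cancel₀ _ h3]

lemma sq_tendsto_quarter :
    Tendsto (fun y : ℝ => y^2) (𝓝[Iio (1/2:ℝ)] (1/2)) (𝓝[Iio (1/4:ℝ)] (1/4)) := by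
  rw [tendsto_nhdsWithin_iff]
  constructor
  · have : Tendsto (fun y : ℝ => y^2) (𝓝 (1/2:ℝ)) (𝓝 ((1/2:ℝ)^2)) :=
      (continuous_pow 2).tendsto _
    rw [show ((1/2:ℝ)^2) = 1/4 by norm_num] at this
    exact this.mono_left nhdsWithin_le_nhds
  · filter_upwards [self_mem_nhdsWithin,
      eventually_nhdsWithin_of_eventually_nhds (eventually_gt_nhds (by norm_num : (-1/2:ℝ) < 1/2))]
        with y hy1 hy2
    have : y^2 < (1/2)^2 := sq_lt_sq' (by linarith) hy1
    simp only [mem_Iio]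
    nlinarith

/-- slope bound from the derivative hypothesis for members of `V1`. -/
lemma V1.slope_le_deriv (hf : V1 α f) {d : ℝ}
    (hd : HasDerivWithinAt f d (Iio (1/2:ℝ)) (1/2)) {s : ℝ} (hs : 0 ≤ s) (hs2 : s < 1/2) :
    f (1/2) - f s ≤ d * (1/4 - s^2) := by
  have hts : Tendsto (slope f (1/2)) (𝓝[Iio (1/2:ℝ)] (1/2)) (𝓝 d) :=
    (hasDerivWithinAt_iff_tendsto_slope' (by simp)).mp hd
  -- Tendsto of Sl f (y^2)
  have hinv : Tendsto (fun y : ℝ => (y + 1/2)⁻¹) (𝓝[Iio (1/2:ℝ)] (1/2)) (𝓝 1) := by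
    have : Tendsto (fun y : ℝ => (y + 1/2)⁻¹) (𝓝 (1/2:ℝ)) (𝓝 ((1/2+1/2:ℝ)⁻¹)) := by
      apply Tendsto.inv₀ (by exact (continuous_id.add continuous_const).tendsto _) (by norm_num)
    rw [show ((1/2+1/2:ℝ)⁻¹) = 1 by norm_num] at this
    exact this.mono_left nhdsWithin_le_nhds
  have hSl : Tendsto (fun y : ℝ => Sl f (y^2)) (𝓝[Iio (1/2:ℝ)] (1/2)) (𝓝 d) := by
    have := hts.mul hinv
    rw [mul_one] at this
    apply this.congr'
    filter_upwards [self_mem_nhdsWithin,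
      eventually_nhdsWithin_of_eventually_nhds (eventually_gt_nhds (by norm_num : (0:ℝ) < 1/2))]
        with y hy1 hy2
    rw [slope_eq' hf.2.1 ⟨hy2, hy1⟩]
    have : y + 1/2 ≠ 0 := by positivity
    field_simp
  -- fixed slope ≤ d
  have hkey : Sl f (s^2) ≤ d := by
    apply ge_of_tendsto hSl
    filter_upwards [self_mem_nhdsWithin,
      eventually_nhdsWithin_of_eventually_nhds (eventually_gt_nhds hs2),
      eventually_nhdsWithin_of_eventually_nhds (eventually_gt_nhds (by norm_num : (0:ℝ) < 1/2))]
        with y hy1 hy2 hy3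
    have hy1' : y < 1/2 := mem_Iio.mp hy1
    have hy2' : s^2 ≤ y^2 := by nlinarith
    have hyq : y^2 < 1/4 := by nlinarith
    exact Sl_mono' hf.2.2.2.2.2.2.1 ⟨by positivity, by nlinarith⟩ ⟨by positivity, hyq⟩ hy2'
  have hneg : s^2 - 1/4 < 0 := by nlinarith
  rw [Sl, div_le_iff_of_neg hneg] at hkey
  have : Real.sqrt (s^2) = s := by rw [Real.sqrt_sq hs]
  rw [this] at hkey
  nlinarith [hkey]

/-- Existence of the left derivative at 1/2 for members of `V1`. -/
lemma exists_leftDeriv' (hev : ∀ x : ℝ, f (-x) = f x)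
    (hcv : ConvexOn ℝ (Ici (0:ℝ)) (fun x => f (Real.sqrt x))) :
    ∃ D : ℝ, HasDerivWithinAt f D (Iio (1/2:ℝ)) (1/2) ∧
      ∀ C : ℝ, (∀ t ∈ Ico (0:ℝ) (1/4), Sl f t ≤ C) → D ≤ C := by
  set S' : ℝ → ℝ := fun t => Sl f (max t 0) with hS'
  have hmax : ∀ t : ℝ, t < 1/4 → max t 0 ∈ Ico (0:ℝ) (1/4) := fun t ht =>
    ⟨le_max_right _ _, max_lt ht (by norm_num)⟩
  have hmono : MonotoneOn S' (Iio (1/4:ℝ)) := by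
    intro t1 h1 t2 h2 h12
    exact Sl_mono' hcv (hmax _ h1) (hmax _ h2) (max_le_max h12 le_rfl)
  have hbdd : BddAbove (S' '' Iio (1/4:ℝ)) := by
    refine ⟨Sl f (1/2), ?_⟩
    rintro y ⟨t, ht, rfl⟩
    exact Sl_le' hcv (hmax _ ht)
  set D := sSup (S' '' Iio (1/4:ℝ)) with hD
  have htend : Tendsto S' (𝓝[<] (1/4:ℝ)) (𝓝 D) := hmono.tendsto_nhdsLT hbdd
  have htend2 : Tendsto (Sl f) (𝓝[<] (1/4:ℝ)) (𝓝 D) := by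
    apply htend.congr'
    filter_upwards [eventually_nhdsWithin_of_eventually_nhds
      (eventually_gt_nhds (by norm_num : (0:ℝ) < 1/4))] with t ht
    rw [hS']
    simp [max_eq_left ht.le]
  have hSl : Tendsto (fun y : ℝ => Sl f (y^2)) (𝓝[Iio (1/2:ℝ)] (1/2)) (𝓝 D) :=
    htend2.comp sq_tendsto_quarter
  have hmul : Tendsto (fun y : ℝ => y + 1/2) (𝓝[Iio (1/2:ℝ)] (1/2)) (𝓝 1) := by
    have : Tendsto (fun y : ℝ => y + 1/2) (𝓝 (1/2:ℝ)) (𝓝 (1/2+1/2:ℝ)) :=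
      (continuous_id.add continuous_const).tendsto _
    rw [show (1/2+1/2:ℝ) = 1 by norm_num] at this
    exact this.mono_left nhdsWithin_le_nhds
  have hts : Tendsto (slope f (1/2)) (𝓝[Iio (1/2:ℝ)] (1/2)) (𝓝 D) := by
    have := hSl.mul hmul
    rw [mul_one] at this
    apply this.congr'
    filter_upwards [self_mem_nhdsWithin,
      eventually_nhdsWithin_of_eventually_nhds (eventually_gt_nhds (by norm_num : (0:ℝ) < 1/2))]
        with y hy1 hy2
    exact (slope_eq' hev ⟨hy2, hy1⟩).symm
  refine ⟨D, (hasDerivWithinAt_iff_tendsto_slope' (by simp)).mpr hts, ?_⟩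
  intro C hC
  apply csSup_le ⟨S' 0, mem_image_of_mem _ (by norm_num)⟩
  rintro y ⟨t, ht, rfl⟩
  exact hC _ (hmax _ ht)

end

open Topology in
lemma V1_seq (hα : α ∈ Ioo (0:ℝ) 1) (u : ℕ → ℝ → ℝ) (hu : ∀ n, V1 α (u n)) :
    ∃ g : ℝ → ℝ, V1 α g ∧ ∃ φ : ℕ → ℕ, StrictMono φ ∧
      Tendsto (fun n => ⨆ x : ℝ, rho α x * |u (φ n) x - g x|) atTop (𝓝 0) := by
  -- Step A: diagonal extraction at rational points
  set e : ℕ → ℚ := fun k => (Denumerable.eqv ℚ).symm k with he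
  set v : ℕ → ℕ → Icc (0:ℝ) 1 := fun n k => ⟨u n (e k), (hu n).nonneg _, (hu n).le_one _⟩
    with hv
  obtain ⟨a, -, φ, hφ, hconv⟩ := isCompact_univ.tendsto_subseq (x := v) (fun n => mem_univ _)
  have hq : ∀ q : ℚ, Tendsto (fun n => u (φ n) (q:ℝ)) atTop (𝓝 (a (Denumerable.eqv ℚ q) : ℝ)) := by
    intro q
    have h1 : Tendsto (fun n => (v ∘ φ) n (Denumerable.eqv ℚ q)) atTop
        (𝓝 (a (Denumerable.eqv ℚ q))) := (tendsto_pi_nhds.mp hconv) _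
    have h2 := (continuous_subtype_val.tendsto _).comp h1
    simp only [Function.comp_def, hv] at h2 ⊢
    convert h2 using 3
    rw [he]
    simp
  -- Step B: pointwise Cauchy, define g
  have hcau : ∀ x : ℝ, CauchySeq (fun n => u (φ n) x) := by
    intro x
    rw [Metric.cauchySeq_iff]
    intro ε hε
    set δ : ℝ := min 1 (ε / (3 * (2*|x| + 2))) with hδ
    have hδ0 : 0 < δ := lt_min one_pos (by positivity)
    obtain ⟨q, hqx⟩ := exists_rat_near x hδ0
    have hstep : ∀ m : ℕ, |u m x - u m q| ≤ ε/3 := by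
      intro m
      calc |u m x - u m q| ≤ |x^2 - (q:ℝ)^2| := (hu m).sq_lip _ _
        _ = |x - q| * |x + q| := by rw [← abs_mul]; ring_nf
        _ ≤ δ * (2*|x| + 2) := by
            apply mul_le_mul hqx.le _ (abs_nonneg _) hδ0.le
            have h1 : |(q:ℝ)| ≤ |x| + δ := by
              have := abs_sub_abs_le_abs_sub (q:ℝ) x
              rw [abs_sub_comm] at hqx
              linarith [hqx.le]
            calc |x + (q:ℝ)| ≤ |x| + |(q:ℝ)| := abs_add_le _ _
              _ ≤ 2*|x| + 2 := by have : δ ≤ 1 := min_le_left _ _; linarith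
        _ ≤ (ε / (3 * (2*|x| + 2))) * (2*|x| + 2) := by
            apply mul_le_mul_of_nonneg_right (min_le_right _ _) (by positivity)
        _ = ε/3 := by field_simp
    obtain ⟨N, hN⟩ := Metric.cauchySeq_iff.mp (hq q).cauchySeq (ε/3) (by positivity)
    refine ⟨N, fun m hm n hn => ?_⟩
    have h2 := hN m hm n hn
    rw [Real.dist_eq] at h2 ⊢
    have h3 := hstep (φ m)
    have h4 := hstep (φ n)
    have : u (φ m) x - u (φ n) x = (u (φ m) x - u (φ m) q) + (u (φ m) q - u (φ n) q)
        + (u (φ n) q - u (φ n) x) := by ring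
    rw [this]
    calc _ ≤ |(u (φ m) x - u (φ m) q) + (u (φ m) q - u (φ n) q)| + |u (φ n) q - u (φ n) x| :=
          abs_add_le _ _
      _ ≤ |u (φ m) x - u (φ m) q| + |u (φ m) q - u (φ n) q| + |u (φ n) q - u (φ n) x| := by
          linarith [abs_add_le (u (φ m) x - u (φ m) q) (u (φ m) q - u (φ n) q)]
      _ < ε := by rw [abs_sub_comm (u (φ n) q)]; linarith
  set g : ℝ → ℝ := fun x => limUnder atTop (fun n => u (φ n) x) with hg
  have hgl : ∀ x : ℝ, Tendsto (fun n => u (φ n) x) atTop (𝓝 (g x)) :=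
    fun x => (hcau x).tendsto_limUnder
  -- limit facts for g
  have hgsq : ∀ x y : ℝ, |g x - g y| ≤ |x^2 - y^2| := by
    intro x y
    have h1 : Tendsto (fun n => |u (φ n) x - u (φ n) y|) atTop (𝓝 |g x - g y|) :=
      ((hgl x).sub (hgl y)).abs
    exact le_of_tendsto h1 (Eventually.of_forall fun n => (hu (φ n)).sq_lip x y)
  have hgev : ∀ x : ℝ, g (-x) = g x := by
    intro x
    exact tendsto_nhds_unique ((hgl (-x)).congr (fun n => (hu (φ n)).2.1 x)) (hgl x)
  have hg0 : g 0 = 1 := by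
    have h1 : Tendsto (fun n : ℕ => u (φ n) 0) atTop (𝓝 1) := by
      have he1 : (fun n : ℕ => u (φ n) 0) = fun _ => 1 := funext fun n => (hu (φ n)).2.2.2.1
      rw [he1]; exact tendsto_const_nhds
    exact tendsto_nhds_unique (hgl 0) h1
  have hgnn : ∀ x : ℝ, 0 ≤ g x := fun x =>
    ge_of_tendsto (hgl x) (Eventually.of_forall fun n => (hu (φ n)).nonneg x)
  have hgle1 : ∀ x : ℝ, g x ≤ 1 := fun x =>
    le_of_tendsto (hgl x) (Eventually.of_forall fun n => (hu (φ n)).le_one x)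
  have hgcont : Continuous g := by
    rw [continuous_iff_continuousAt]
    intro x₀
    have h0 : Tendsto (fun x => |g x - g x₀|) (𝓝 x₀) (𝓝 0) := by
      apply squeeze_zero (fun _ => abs_nonneg _) (fun x => hgsq x x₀)
      have : Continuous (fun x : ℝ => |x^2 - x₀^2|) := by continuity
      simpa using this.tendsto x₀
    rw [ContinuousAt, tendsto_iff_dist_tendsto_zero]
    simpa [Real.dist_eq] using h0
  have hganti : AntitoneOn g (Ici (0:ℝ)) := by
    intro x hx y hy hxy
    exact le_of_tendsto_of_tendsto' (hgl y) (hgl x)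
      (fun n => (hu (φ n)).2.2.2.2.2.1 hx hy hxy)
  have hgcv : ConvexOn ℝ (Ici (0:ℝ)) (fun x => g (Real.sqrt x)) := by
    refine ⟨convex_Ici 0, fun x hx y hy c b hc hb hcb => ?_⟩
    refine le_of_tendsto_of_tendsto' (hgl (Real.sqrt (c • x + b • y)))
      (((hgl (Real.sqrt x)).const_mul c).add ((hgl (Real.sqrt y)).const_mul b)) (fun n => ?_)
    simpa [smul_eq_mul] using (hu (φ n)).2.2.2.2.2.2.1.2 hx hy hc hb hcb
  have hglb : ∀ x : ℝ, max 0 (1 - x^2) ≤ g x := fun x =>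
    ge_of_tendsto (hgl x) (Eventually.of_forall fun n => (hu (φ n)).2.2.2.2.2.2.2.1 x)
  -- derivative condition for g
  have hgderiv : ∃ d : ℝ, HasDerivWithinAt g d (Iio (1/2 : ℝ)) (1/2 : ℝ) ∧ d ≤ -(etaC α) := by
    obtain ⟨D, hD1, hD2⟩ := exists_leftDeriv' hgev hgcv
    refine ⟨D, hD1, hD2 _ ?_⟩
    rintro t ⟨ht0, ht4⟩
    set s : ℝ := Real.sqrt t with hs
    have hss : s^2 = t := Real.sq_sqrt ht0
    have hs0 : 0 ≤ s := Real.sqrt_nonneg t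
    have hs2 : s < 1/2 := by
      rw [← sqrt_quarter]
      exact Real.sqrt_lt_sqrt ht0 ht4
    have hbd : ∀ n : ℕ, u (φ n) (1/2) - u (φ n) s ≤ -(etaC α) * (1/4 - s^2) := by
      intro n
      obtain ⟨d, hd, hdη⟩ := (hu (φ n)).2.2.2.2.2.2.2.2
      calc u (φ n) (1/2) - u (φ n) s ≤ d * (1/4 - s^2) :=
            (hu (φ n)).slope_le_deriv hd hs0 hs2
        _ ≤ -(etaC α) * (1/4 - s^2) := by
            apply mul_le_mul_of_nonneg_right hdη
            nlinarith
    have hglim : g (1/2) - g s ≤ -(etaC α) * (1/4 - s^2) :=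
      le_of_tendsto_of_tendsto' ((hgl (1/2)).sub (hgl s)) tendsto_const_nhds hbd
    have hneg : t - 1/4 < 0 := by linarith
    rw [Sl, div_le_iff_of_neg hneg, ← hs, ← hss]
    linarith [hglim]
  have hgV1 : V1 α g :=
    ⟨hgcont, hgev, ⟨1, fun x => mul_le_one₀ (rho_le_one hα x) (abs_nonneg _)
        (by rw [abs_of_nonneg (hgnn x)]; exact hgle1 x)⟩,
      hg0, fun x hx => hgnn x, hganti, hgcv, hglb, hgderiv⟩
  -- Step C: local uniform convergence
  have hunif : ∀ ε : ℝ, 0 < ε → ∀ R : ℝ, 0 < R →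
      ∀ᶠ n in atTop, ∀ x : ℝ, |x| ≤ R → |u (φ n) x - g x| ≤ ε := by
    intro ε hε R hR
    set δ : ℝ := min 1 (ε / (3 * (2*R + 2))) with hδ
    have hδ0 : 0 < δ := lt_min one_pos (by positivity)
    have hδ1 : δ ≤ 1 := min_le_left _ _
    -- finite subcover of Icc (-R) R by rational balls
    have hcover : Icc (-R) R ⊆ ⋃ q : ℚ, Metric.ball (q:ℝ) δ := by
      intro x _
      obtain ⟨q, hq'⟩ := exists_rat_near x hδ0
      exact mem_iUnion.mpr ⟨q, by rwa [Metric.mem_ball, Real.dist_eq]⟩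
    obtain ⟨t, ht⟩ := isCompact_Icc.elim_finite_subcover _ (fun q : ℚ => Metric.isOpen_ball) hcover
    have hev : ∀ᶠ n in atTop, ∀ q ∈ t, |u (φ n) (q:ℝ) - g (q:ℝ)| ≤ ε/3 := by
      rw [eventually_all_finset]
      intro q hq'
      have := Metric.tendsto_nhds.mp (hgl (q:ℝ)) (ε/3) (by positivity)
      filter_upwards [this] with n hn
      rw [Real.dist_eq] at hn
      exact hn.le
    filter_upwards [hev] with n hn x hx
    have hxI : x ∈ Icc (-R) R := abs_le.mp hx
    obtain ⟨q, hqt, hqb⟩ := mem_iUnion₂.mp (ht hxI)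
    rw [Metric.mem_ball, Real.dist_eq] at hqb
    have hqabs : |(q:ℝ)| ≤ R + 1 := by
      have := abs_sub_abs_le_abs_sub (q:ℝ) x
      rw [abs_sub_comm] at hqb
      linarith [hqb.le]
    have hsq : |x^2 - (q:ℝ)^2| ≤ ε/3 := by
      calc |x^2 - (q:ℝ)^2| = |x - q| * |x + q| := by rw [← abs_mul]; ring_nf
        _ ≤ δ * (2*R + 2) := by
            apply mul_le_mul hqb.le _ (abs_nonneg _) hδ0.le
            calc |x + (q:ℝ)| ≤ |x| + |(q:ℝ)| := abs_add_le _ _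
              _ ≤ 2*R + 2 := by linarith
        _ ≤ (ε / (3 * (2*R + 2))) * (2*R + 2) :=
            mul_le_mul_of_nonneg_right (min_le_right _ _) (by positivity)
        _ = ε/3 := by field_simp
    calc |u (φ n) x - g x| ≤ |u (φ n) x - u (φ n) q| + |u (φ n) (q:ℝ) - g (q:ℝ)|
          + |g (q:ℝ) - g x| := by
          have : u (φ n) x - g x = (u (φ n) x - u (φ n) q) + (u (φ n) (q:ℝ) - g (q:ℝ))
              + (g (q:ℝ) - g x) := by ring
          rw [this]
          have habs := abs_add_le (u (φ n) x - u (φ n) q) (u (φ n) (q:ℝ) - g (q:ℝ))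
          exact (abs_add_le _ _).trans (by linarith)
      _ ≤ ε/3 + ε/3 + ε/3 := by
          refine add_le_add (add_le_add ?_ (hn q hqt)) ?_
          · exact ((hu (φ n)).sq_lip x q).trans hsq
          · rw [abs_sub_comm] at hsq
            exact (hgsq (q:ℝ) x).trans hsq
      _ = ε := by ring
  -- Step E: convergence of the weighted sup
  refine ⟨g, hgV1, φ, hφ, ?_⟩
  have hbdd : ∀ n : ℕ, BddAbove (range fun x : ℝ => rho α x * |u (φ n) x - g x|) := by
    intro n
    refine ⟨2, ?_⟩
    rintro y ⟨x, rfl⟩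
    have h1 : |u (φ n) x - g x| ≤ 2 := by
      have := (hu (φ n)).nonneg x
      have := (hu (φ n)).le_one x
      have := hgnn x
      have := hgle1 x
      rw [abs_le]; constructor <;> linarith
    calc rho α x * |u (φ n) x - g x| ≤ 1 * 2 :=
        mul_le_mul (rho_le_one hα x) h1 (abs_nonneg _) one_pos.le
      _ = 2 := by ring
  rw [Metric.tendsto_nhds]
  intro ε hε
  -- choose R with 2 * (1+R)^(-α) ≤ ε/2
  have htail : Tendsto (fun R : ℝ => 2 * (1+R) ^ (-α)) atTop (𝓝 0) := by
    have h1 : Tendsto (fun R : ℝ => (1+R)) atTop atTop :=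
      tendsto_atTop_add_const_left _ _ tendsto_id
    have := ((tendsto_rpow_neg_atTop hα.1).comp h1).const_mul 2
    simpa using this
  obtain ⟨R, hR1, hR2⟩ : ∃ R : ℝ, 1 ≤ R ∧ 2 * (1+R) ^ (-α) ≤ ε/2 := by
    have := (htail.eventually (eventually_le_nhds (show (0:ℝ) < ε/2 by positivity))).and
      (eventually_ge_atTop (1:ℝ))
    obtain ⟨R, h1, h2⟩ := this.exists
    exact ⟨R, h2, h1⟩
  have hRpos : (0:ℝ) < R := lt_of_lt_of_le one_pos hR1
  filter_upwards [hunif (ε/2) (by positivity) R hRpos] with n hn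
  rw [Real.dist_eq, sub_zero]
  have hsup : (⨆ x : ℝ, rho α x * |u (φ n) x - g x|) ≤ ε/2 := by
    apply ciSup_le
    intro x
    rcases le_or_gt |x| R with h | h
    · calc rho α x * |u (φ n) x - g x| ≤ 1 * (ε/2) :=
          mul_le_mul (rho_le_one hα x) (hn x h) (abs_nonneg _) one_pos.le
        _ = ε/2 := by ring
    · have hρ : rho α x ≤ (1+R) ^ (-α) :=
        Real.rpow_le_rpow_of_nonpos (by positivity) (by linarith) (by linarith [hα.1])
      have h1 : |u (φ n) x - g x| ≤ 2 := by
        have := (hu (φ n)).nonneg x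
        have := (hu (φ n)).le_one x
        have := hgnn x
        have := hgle1 x
        rw [abs_le]; constructor <;> linarith
      calc rho α x * |u (φ n) x - g x| ≤ (1+R) ^ (-α) * 2 :=
          mul_le_mul hρ h1 (abs_nonneg _) (by positivity)
        _ ≤ ε/2 := by linarith [hR2]
  have hnn : (0:ℝ) ≤ ⨆ x : ℝ, rho α x * |u (φ n) x - g x| := by
    refine le_trans ?_ (le_ciSup (hbdd n) 0)
    exact mul_nonneg (rho_pos hα 0).le (abs_nonneg _)
  rw [abs_of_nonneg hnn]
  linarith

open Topology in
theorem V1_compact' (hα : α ∈ Ioo (0:ℝ) 1) :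
    IsCompact {F : ℝ →ᵇ ℝ | ∃ f : ℝ → ℝ, V1 α f ∧ ∀ x : ℝ, F x = rho α x * f x} ∧
    ∀ u : ℕ → ℝ → ℝ, (∀ n, V1 α (u n)) →
      ∃ g : ℝ → ℝ, V1 α g ∧ ∃ φ : ℕ → ℕ, StrictMono φ ∧
        Tendsto (fun n => ⨆ x : ℝ, rho α x * |u (φ n) x - g x|) atTop (nhds 0) := by
  constructor
  · apply IsSeqCompact.isCompact
    intro F hF
    choose f hf1 hf2 using hF
    obtain ⟨g, hg, φ, hφ, htend⟩ := V1_seq hα f hf1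
    have hGcont : Continuous fun x => rho α x * g x := (rho_cont hα).mul hg.1
    have hGb : ∀ x : ℝ, ‖rho α x * g x‖ ≤ 1 := by
      intro x
      rw [Real.norm_eq_abs, abs_mul, abs_of_pos (rho_pos hα x), abs_of_nonneg (hg.nonneg x)]
      exact mul_le_one₀ (rho_le_one hα x) (hg.nonneg x) (hg.le_one x)
    set G : ℝ →ᵇ ℝ := BoundedContinuousFunction.ofNormedAddCommGroup _ hGcont 1 hGb with hG
    have hGx : ∀ x : ℝ, G x = rho α x * g x := fun x => rfl
    refine ⟨G, ⟨g, hg, hGx⟩, φ, hφ, ?_⟩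
    have hbdd : ∀ n : ℕ, BddAbove (range fun x : ℝ => rho α x * |f (φ n) x - g x|) := by
      intro n
      refine ⟨2, ?_⟩
      rintro y ⟨x, rfl⟩
      have h1 : |f (φ n) x - g x| ≤ 2 := by
        have := (hf1 (φ n)).nonneg x
        have := (hf1 (φ n)).le_one x
        have := hg.nonneg x
        have := hg.le_one x
        rw [abs_le]; constructor <;> linarith
      calc rho α x * |f (φ n) x - g x| ≤ 1 * 2 :=
          mul_le_mul (rho_le_one hα x) h1 (abs_nonneg _) one_pos.le
        _ = 2 := by ring
    have hnn : ∀ n : ℕ, (0:ℝ) ≤ ⨆ x : ℝ, rho α x * |f (φ n) x - g x| := by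
      intro n
      refine le_trans ?_ (le_ciSup (hbdd n) 0)
      exact mul_nonneg (rho_pos hα 0).le (abs_nonneg _)
    have hdist : ∀ n : ℕ, dist ((F ∘ φ) n) G ≤ ⨆ x : ℝ, rho α x * |f (φ n) x - g x| := by
      intro n
      rw [BoundedContinuousFunction.dist_le (hnn n)]
      intro x
      rw [Real.dist_eq, Function.comp_apply, hf2 (φ n) x, hGx x, ← mul_sub, abs_mul, abs_of_pos (rho_pos hα x)]
      exact le_ciSup (hbdd n) x
    rw [tendsto_iff_dist_tendsto_zero]
    exact squeeze_zero (fun n => dist_nonneg) hdist htend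
  · intro u hu
    exact V1_seq hα u hu


/-- For every `α ∈ (0,1)`, the set `𝒱₁` is compact with respect to the weighted
uniform metric `d(f,g) = sup_x ρ(x)|f(x)-g(x)|`: the isometric image
`{ρ·f : f ∈ 𝒱₁}` inside the bounded continuous functions is compact, and every
sequence in `𝒱₁` admits a subsequence converging in the metric `d`
to an element of `𝒱₁`. -/
theorem V1_compact (α : ℝ) (hα : α ∈ Ioo (0:ℝ) 1) :
    IsCompact {F : ℝ →ᵇ ℝ | ∃ f : ℝ → ℝ, V1 α f ∧ ∀ x : ℝ, F x = rho α x * f x} ∧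
    ∀ u : ℕ → ℝ → ℝ, (∀ n, V1 α (u n)) →
      ∃ g : ℝ → ℝ, V1 α g ∧ ∃ φ : ℕ → ℕ, StrictMono φ ∧
        Tendsto (fun n => ⨆ x : ℝ, rho α x * |u (φ n) x - g x|) atTop (nhds 0) :=
  V1_compact' hα

end GSQGplane
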